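/- Under the assumptions of the contraction theorem (finite S, A, γ ∈ (0,1), δ, ε ≥ 0 with L := γ(1+√(2δ)) < 1), the operator R_ε admits a unique fixed point U*_ε : S×A → ℝ satisfying U*_ε = R_ε[U*_ε]. -/
import Mathlib


noncomputable def supNorm {Z : Type*} [Fintype Z] [Nonempty Z] (f : Z → ℝ) : ℝ :=
  ⨆ z, |f z|

noncomputable def vmax {S A : Type*} [Fintype A] [Nonempty A] (U : S × A → ℝ) (s : S) : ℝ :=
  ⨆ a, U (s, a)

def expect {Ω : Type*} [Fintype Ω] (p : Ω → ℝ) (f : Ω → ℝ) : ℝ :=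
  ∑ ω, p ω * f ω

noncomputable def variance {Ω : Type*} [Fintype Ω] (p : Ω → ℝ) (f : Ω → ℝ) : ℝ :=
  expect p (fun ω => f ω ^ 2) - (expect p f) ^ 2

/-- The stabilized approximate robust Bellman operator `R_ε`. -/
noncomputable def Rop {S A : Type*} [Fintype S] [Fintype A] [Nonempty A]
    (P0 : S × A → S → ℝ) (r : S × A → ℝ) (γ δ ε : ℝ) (U : S × A → ℝ) (z : S × A) : ℝ :=
  r z + γ * expect (P0 z) (vmax U)
    - γ * Real.sqrt (2 * δ) * Real.sqrt (variance (P0 z) (vmax U) + ε)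

section Aux

variable {Ω : Type*} [Fintype Ω]

lemma expect_shift (p f : Ω → ℝ) (hp1 : ∑ s, p s = 1) (c : ℝ) :
    expect p (fun ω => (f ω - c) ^ 2)
      = expect p (fun ω => f ω ^ 2) - 2 * c * expect p f + c ^ 2 := by
  simp only [expect]
  rw [Finset.sum_congr rfl (fun ω _ =>
    (by ring : p ω * (f ω - c) ^ 2
      = p ω * f ω ^ 2 - 2 * c * (p ω * f ω) + c ^ 2 * p ω)),
    Finset.sum_add_distrib, Finset.sum_sub_distrib, ← Finset.mul_sum, ← Finset.mul_sum, hp1]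
  ring

lemma variance_eq (p f : Ω → ℝ) (hp1 : ∑ s, p s = 1) :
    variance p f = expect p (fun ω => (f ω - expect p f) ^ 2) := by
  rw [expect_shift p f hp1 (expect p f)]
  simp only [variance]; ring

lemma variance_nonneg (p f : Ω → ℝ) (hp0 : ∀ s, 0 ≤ p s) (hp1 : ∑ s, p s = 1) :
    0 ≤ variance p f := by
  rw [variance_eq p f hp1, expect]
  exact Finset.sum_nonneg fun ω _ => mul_nonneg (hp0 ω) (sq_nonneg _)

lemma abs_expect_le (p f : Ω → ℝ) (hp0 : ∀ s, 0 ≤ p s) (hp1 : ∑ s, p s = 1)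
    {C : ℝ} (hC : ∀ ω, |f ω| ≤ C) : |expect p f| ≤ C := by
  calc |expect p f| ≤ ∑ ω, |p ω * f ω| := Finset.abs_sum_le_sum_abs _ _
    _ ≤ ∑ ω, p ω * C := by
        refine Finset.sum_le_sum fun ω _ => ?_
        rw [abs_mul, abs_of_nonneg (hp0 ω)]
        exact mul_le_mul_of_nonneg_left (hC ω) (hp0 ω)
    _ = C := by rw [← Finset.sum_mul, hp1, one_mul]

/-- Cauchy-Schwarz for `expect`. -/
lemma expect_mul_sq_le (p f g : Ω → ℝ) (hp0 : ∀ s, 0 ≤ p s) :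
    (expect p (fun ω => f ω * g ω)) ^ 2
      ≤ expect p (fun ω => f ω ^ 2) * expect p (fun ω => g ω ^ 2) := by
  have h := Finset.sum_mul_sq_le_sq_mul_sq Finset.univ
    (fun ω => Real.sqrt (p ω) * f ω) (fun ω => Real.sqrt (p ω) * g ω)
  have e1 : ∀ ω, (Real.sqrt (p ω) * f ω) * (Real.sqrt (p ω) * g ω) = p ω * (f ω * g ω) := by
    intro ω
    have hs : Real.sqrt (p ω) * Real.sqrt (p ω) = p ω := Real.mul_self_sqrt (hp0 ω)
    calc (Real.sqrt (p ω) * f ω) * (Real.sqrt (p ω) * g ω)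
        = (Real.sqrt (p ω) * Real.sqrt (p ω)) * (f ω * g ω) := by ring
      _ = p ω * (f ω * g ω) := by rw [hs]
  have e2 : ∀ (h : Ω → ℝ) ω, (Real.sqrt (p ω) * h ω) ^ 2 = p ω * h ω ^ 2 := by
    intro h ω
    rw [mul_pow, Real.sq_sqrt (hp0 ω)]
  simp only [e1, e2] at h
  simpa [expect] using h

lemma sum_split (p g h : Ω → ℝ) (cg ch : ℝ) :
    expect p (fun ω => ((g ω - cg) + (h ω - ch)) ^ 2)
      = expect p (fun ω => (g ω - cg) ^ 2)
        + 2 * expect p (fun ω => (g ω - cg) * (h ω - ch))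
        + expect p (fun ω => (h ω - ch) ^ 2) := by
  simp only [expect]
  rw [Finset.mul_sum, ← Finset.sum_add_distrib, ← Finset.sum_add_distrib]
  exact Finset.sum_congr rfl fun ω _ => by ring

/-- Triangle-type inequality for the standard deviation. -/
lemma sqrt_variance_le (p f g : Ω → ℝ) (hp0 : ∀ s, 0 ≤ p s) (hp1 : ∑ s, p s = 1)
    {D : ℝ} (hD : 0 ≤ D) (hfg : ∀ ω, |f ω - g ω| ≤ D) :
    Real.sqrt (variance p f) ≤ Real.sqrt (variance p g) + D := by
  have hexph : expect p f = expect p g + expect p (fun ω => f ω - g ω) := by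
    simp only [expect]
    rw [← Finset.sum_add_distrib]
    exact Finset.sum_congr rfl fun ω _ => by ring
  set h : Ω → ℝ := fun ω => f ω - g ω with hh
  set cg := expect p g with hcg
  set ch := expect p h with hch
  have hf' : ∀ ω, f ω - expect p f = (g ω - cg) + (h ω - ch) := by
    intro ω; rw [hexph]; simp only [hh]; ring
  have hVf : variance p f = variance p g
      + 2 * expect p (fun ω => (g ω - cg) * (h ω - ch)) + variance p h := by
    rw [variance_eq p f hp1, variance_eq p g hp1, variance_eq p h hp1, ← hcg, ← hch]
    have e : (fun ω => (f ω - expect p f) ^ 2)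
        = (fun ω => ((g ω - cg) + (h ω - ch)) ^ 2) := funext fun ω => by rw [hf' ω]
    rw [e, sum_split p g h cg ch]
  have hVg0 : 0 ≤ variance p g := variance_nonneg p g hp0 hp1
  have hVh0 : 0 ≤ variance p h := variance_nonneg p h hp0 hp1
  have hcs : expect p (fun ω => (g ω - cg) * (h ω - ch))
      ≤ Real.sqrt (variance p g) * Real.sqrt (variance p h) := by
    have hb := expect_mul_sq_le p (fun ω => g ω - cg) (fun ω => h ω - ch) hp0
    have eg : expect p (fun ω => (g ω - cg) ^ 2) = variance p g := by
      rw [variance_eq p g hp1, ← hcg]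
    have eh : expect p (fun ω => (h ω - ch) ^ 2) = variance p h := by
      rw [variance_eq p h hp1, ← hch]
    rw [eg, eh] at hb
    have h2 : expect p (fun ω => (g ω - cg) * (h ω - ch))
        ≤ |expect p (fun ω => (g ω - cg) * (h ω - ch))| := le_abs_self _
    refine h2.trans ?_
    rw [← Real.sqrt_mul_self (abs_nonneg _), ← Real.sqrt_mul hVg0]
    refine Real.sqrt_le_sqrt ?_
    nlinarith [hb, sq_abs (expect p (fun ω => (g ω - cg) * (h ω - ch)))]
  have hVhD : Real.sqrt (variance p h) ≤ D := by
    have hb : ∀ ω, h ω ^ 2 ≤ D ^ 2 := by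
      intro ω
      have h1 : |h ω| ≤ D := by simpa [hh] using hfg ω
      calc h ω ^ 2 = |h ω| ^ 2 := (sq_abs _).symm
        _ ≤ D ^ 2 := by nlinarith [abs_nonneg (h ω)]
    have h2 : expect p (fun ω => h ω ^ 2) ≤ D ^ 2 := by
      calc expect p (fun ω => h ω ^ 2) ≤ ∑ ω, p ω * D ^ 2 :=
            Finset.sum_le_sum fun ω _ => mul_le_mul_of_nonneg_left (hb ω) (hp0 ω)
        _ = D ^ 2 := by rw [← Finset.sum_mul, hp1, one_mul]
    have h3 : variance p h ≤ D ^ 2 := by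
      have := sq_nonneg (expect p h)
      simp only [variance] at *
      linarith
    calc Real.sqrt (variance p h) ≤ Real.sqrt (D ^ 2) := Real.sqrt_le_sqrt h3
      _ = D := Real.sqrt_sq hD
  have hsg : Real.sqrt (variance p g) ^ 2 = variance p g := Real.sq_sqrt hVg0
  have hsh : Real.sqrt (variance p h) ^ 2 = variance p h := Real.sq_sqrt hVh0
  have hsg0 : 0 ≤ Real.sqrt (variance p g) := Real.sqrt_nonneg _
  have hsh0 : 0 ≤ Real.sqrt (variance p h) := Real.sqrt_nonneg _
  have key : variance p f ≤ (Real.sqrt (variance p g) + D) ^ 2 := by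
    nlinarith [hVf, hcs, hVhD, mul_le_mul_of_nonneg_left hVhD hsg0]
  calc Real.sqrt (variance p f) ≤ Real.sqrt ((Real.sqrt (variance p g) + D) ^ 2) :=
        Real.sqrt_le_sqrt key
    _ = Real.sqrt (variance p g) + D := Real.sqrt_sq (by positivity)

lemma sqrt_var_eps_le (p f g : Ω → ℝ) (hp0 : ∀ s, 0 ≤ p s) (hp1 : ∑ s, p s = 1)
    {ε : ℝ} (hε : 0 ≤ ε) {D : ℝ} (hD : 0 ≤ D) (hfg : ∀ ω, |f ω - g ω| ≤ D) :
    Real.sqrt (variance p f + ε) ≤ Real.sqrt (variance p g + ε) + D := by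
  have h1 := sqrt_variance_le p f g hp0 hp1 hD hfg
  have hVf0 := variance_nonneg p f hp0 hp1
  have hVg0 := variance_nonneg p g hp0 hp1
  have hsg : Real.sqrt (variance p g) ≤ Real.sqrt (variance p g + ε) :=
    Real.sqrt_le_sqrt (by linarith)
  have h2 : variance p f ≤ (Real.sqrt (variance p g) + D) ^ 2 := by
    have h3 := pow_le_pow_left₀ (Real.sqrt_nonneg (variance p f)) h1 2
    rwa [Real.sq_sqrt hVf0] at h3
  have key : variance p f + ε ≤ (Real.sqrt (variance p g + ε) + D) ^ 2 := by
    have e1 : Real.sqrt (variance p g + ε) ^ 2 = variance p g + ε :=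
      Real.sq_sqrt (by linarith)
    have e2 : Real.sqrt (variance p g) ^ 2 = variance p g := Real.sq_sqrt hVg0
    nlinarith [Real.sqrt_nonneg (variance p g + ε), Real.sqrt_nonneg (variance p g)]
  calc Real.sqrt (variance p f + ε) ≤ Real.sqrt ((Real.sqrt (variance p g + ε) + D) ^ 2) :=
        Real.sqrt_le_sqrt key
    _ = _ := Real.sqrt_sq (by positivity)

end Aux

lemma abs_vmax_sub_le {S A : Type*} [Fintype A] [Nonempty A] (U V : S × A → ℝ) (s : S)
    {D : ℝ} (hUV : ∀ z, |U z - V z| ≤ D) : |vmax U s - vmax V s| ≤ D := by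
  have key : ∀ (U V : S × A → ℝ), (∀ z, |U z - V z| ≤ D) → vmax U s ≤ vmax V s + D := by
    intro U V h
    refine ciSup_le fun a => ?_
    have h1 : U (s, a) ≤ V (s, a) + D := by
      have := h (s, a); rw [abs_le] at this; linarith [this.2]
    have h2 : V (s, a) ≤ vmax V s := by
      unfold vmax
      exact le_ciSup (Set.Finite.bddAbove (Set.finite_range fun a => V (s, a))) a
    linarith
  have h1 := key U V hUV
  have h2 := key V U (fun z => by rw [abs_sub_comm]; exact hUV z)
  rw [abs_le]; constructor <;> [linarith; linarith]

theorem stmt5 {S A : Type*} [Fintype S] [Nonempty S] [Fintype A] [Nonempty A]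
    (P0 : S × A → S → ℝ) (hP0 : ∀ z, (∀ s, 0 ≤ P0 z s) ∧ ∑ s, P0 z s = 1)
    (r : S × A → ℝ) (γ δ ε : ℝ) (hγ : γ ∈ Set.Ioo (0 : ℝ) 1) (hδ : 0 ≤ δ) (hε : 0 ≤ ε)
    (hL : γ * (1 + Real.sqrt (2 * δ)) < 1) :
    ∃! U : S × A → ℝ, ∀ z, Rop P0 r γ δ ε U z = U z := by
  obtain ⟨hγ0, hγ1⟩ := hγ
  set L := γ * (1 + Real.sqrt (2 * δ)) with hLdef
  have hs0 : 0 ≤ Real.sqrt (2 * δ) := Real.sqrt_nonneg _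
  have hL0 : 0 ≤ L := by positivity
  set F := Rop P0 r γ δ ε with hF
  have tri : ∀ a b : ℝ, |a - b| ≤ |a| + |b| := fun a b => by
    calc |a - b| = |a + -b| := by ring_nf
      _ ≤ |a| + |-b| := abs_add_le _ _
      _ = |a| + |b| := by rw [abs_neg]
  have hlip : ∀ U V : S × A → ℝ, dist (F U) (F V) ≤ L * dist U V := by
    intro U V
    rw [dist_pi_le_iff (by positivity)]
    intro z
    rw [Real.dist_eq]
    obtain ⟨hp0, hp1⟩ := hP0 z
    set D := dist U V with hDdef
    have hD0 : 0 ≤ D := dist_nonneg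
    have hUV : ∀ w, |U w - V w| ≤ D := fun w => by
      rw [← Real.dist_eq]; exact dist_le_pi_dist U V w
    have hvm : ∀ s, |vmax U s - vmax V s| ≤ D := fun s => abs_vmax_sub_le U V s hUV
    have hexp : |expect (P0 z) (vmax U) - expect (P0 z) (vmax V)| ≤ D := by
      have e : expect (P0 z) (vmax U) - expect (P0 z) (vmax V)
          = expect (P0 z) (fun s => vmax U s - vmax V s) := by
        simp only [expect]
        rw [← Finset.sum_sub_distrib]
        exact Finset.sum_congr rfl fun s _ => by ring
      rw [e]; exact abs_expect_le _ _ hp0 hp1 hvm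
    have hsq : |Real.sqrt (variance (P0 z) (vmax U) + ε)
        - Real.sqrt (variance (P0 z) (vmax V) + ε)| ≤ D := by
      rw [abs_le]
      constructor
      · have := sqrt_var_eps_le (P0 z) (vmax V) (vmax U) hp0 hp1 hε hD0
          (fun s => by rw [abs_sub_comm]; exact hvm s)
        linarith
      · have := sqrt_var_eps_le (P0 z) (vmax U) (vmax V) hp0 hp1 hε hD0 hvm
        linarith
    have e : F U z - F V z
        = γ * (expect (P0 z) (vmax U) - expect (P0 z) (vmax V))
          - γ * Real.sqrt (2 * δ) * (Real.sqrt (variance (P0 z) (vmax U) + ε)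
            - Real.sqrt (variance (P0 z) (vmax V) + ε)) := by
      simp only [hF, Rop]; ring
    rw [e]
    calc |γ * (expect (P0 z) (vmax U) - expect (P0 z) (vmax V))
          - γ * Real.sqrt (2 * δ) * (Real.sqrt (variance (P0 z) (vmax U) + ε)
            - Real.sqrt (variance (P0 z) (vmax V) + ε))|
        ≤ |γ * (expect (P0 z) (vmax U) - expect (P0 z) (vmax V))|
          + |γ * Real.sqrt (2 * δ) * (Real.sqrt (variance (P0 z) (vmax U) + ε)
            - Real.sqrt (variance (P0 z) (vmax V) + ε))| := tri _ _
      _ ≤ γ * D + γ * Real.sqrt (2 * δ) * D := by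
          rw [abs_mul, abs_mul, abs_mul, abs_of_nonneg hγ0.le, abs_of_nonneg hs0]
          have := mul_le_mul_of_nonneg_left hexp hγ0.le
          have := mul_le_mul_of_nonneg_left hsq (by positivity : 0 ≤ γ * Real.sqrt (2 * δ))
          linarith
      _ = L * D := by rw [hLdef]; ring
  have hK : ContractingWith L.toNNReal F := by
    constructor
    · rw [← Real.toNNReal_one]
      exact (Real.toNNReal_lt_toNNReal_iff one_pos).mpr hL
    · refine LipschitzWith.of_dist_le_mul fun U V => ?_
      rw [Real.coe_toNNReal L hL0]
      exact hlip U V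
  refine ⟨ContractingWith.fixedPoint F hK, fun z => congrFun hK.fixedPoint_isFixedPt z, ?_⟩
  intro V hV
  exact hK.fixedPoint_unique (funext hV)
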